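/- Fix a real p ∈ (0,1) and an integer K ≥ 2, and let 𝒮 be the collection of subsets of {1,…,K} of size at least 2. Define λ* : 𝒮 → ℝ by λ*({n, n+1, …, K}) = (1−p^{K−n+1})/(K−1+p) for each n ∈ {2,…,K−1}, λ*({1,…,K}) = (1−p^K)/((1−p)·(K−1+p)), and λ*(S) = 0 for all other S ∈ 𝒮. Then the minimum over permutations σ ≠ id of {1,…,K} of Σ_{S∈𝒮} λ*(S)·d_S(σ) equals log(1/p)·(1−p)/(K−1+p); in particular, the nested allocation λ* attains the supremum in the full-ranking max-min problem over OA alternatives. -/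

import Mathlib

/-- Ordinal Attraction choice probability of item `i` from display set `S`
under the ranking `σ`. -/
noncomputable def oa {K : ℕ} (p : ℝ) (σ : Equiv.Perm (Fin K))
    (S : Finset (Fin K)) (i : Fin K) : ℝ :=
  (1 - p) * p ^ ((S.filter fun j => σ j ≤ σ i).card - 1) / (1 - p ^ S.card)

/-- `d_S(σ)`: KL divergence on `S` between the OA model with the identity
ranking and the OA model with ranking `σ`. -/
noncomputable def dS {K : ℕ} (p : ℝ) (S : Finset (Fin K)) (σ : Equiv.Perm (Fin K)) : ℝ :=
  ∑ i ∈ S, oa p 1 S i * Real.log (oa p 1 S i / oa p σ S i)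

/-- The nested "tail" display set `{n, n+1, …, K−1}` (0-indexed). -/
def tailSet (K : ℕ) (n : ℕ) : Finset (Fin K) :=
  Finset.univ.filter fun j : Fin K => n ≤ (j : ℕ)

/-- The optimal nested allocation `λ*`. -/
noncomputable def lamStar (p : ℝ) (K : ℕ) (S : Finset (Fin K)) : ℝ :=
  (if S = tailSet K 0 then (1 - p ^ K) / ((1 - p) * ((K : ℝ) - 1 + p)) else 0)
  + ∑ n ∈ Finset.Icc 1 (K - 2),
      (if S = tailSet K n then (1 - p ^ (K - n)) / ((K : ℝ) - 1 + p) else 0)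


namespace OAProof

variable {K : ℕ} {p : ℝ}

def rk (S : Finset (Fin K)) (σ : Equiv.Perm (Fin K)) (i : Fin K) : ℕ :=
  (S.filter fun j => σ j ≤ σ i).card

noncomputable def ISum (p : ℝ) (S : Finset (Fin K)) (σ : Equiv.Perm (Fin K)) : ℝ :=
  ∑ i ∈ S, ∑ j ∈ S,
    (if j < i ∧ σ i < σ j then p ^ (rk S 1 j - 1) - p ^ (rk S 1 i - 1) else 0)

lemma rk_pos {S : Finset (Fin K)} {σ : Equiv.Perm (Fin K)} {i : Fin K} (hi : i ∈ S) :
    1 ≤ rk S σ i := by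
  rw [rk, Nat.succ_le_iff, Finset.card_pos]
  exact ⟨i, Finset.mem_filter.2 ⟨hi, le_rfl⟩⟩

lemma rk_le {S : Finset (Fin K)} (σ : Equiv.Perm (Fin K)) (i : Fin K) :
    rk S σ i ≤ S.card := Finset.card_filter_le _ _

lemma rk_lt_rk {S : Finset (Fin K)} {σ : Equiv.Perm (Fin K)} {a b : Fin K}
    (ha : a ∈ S) (hb : b ∈ S) (hab : σ a < σ b) : rk S σ a < rk S σ b := by
  apply Finset.card_lt_card
  constructor
  · intro x hx
    rw [Finset.mem_filter] at hx ⊢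
    exact ⟨hx.1, hx.2.trans hab.le⟩
  · intro h
    have := h (Finset.mem_filter.2 ⟨hb, le_rfl⟩)
    rw [Finset.mem_filter] at this
    exact absurd this.2 (not_le.2 hab)

lemma rk_one_lt {S : Finset (Fin K)} {a b : Fin K}
    (ha : a ∈ S) (hb : b ∈ S) (hab : a < b) : rk S 1 a < rk S 1 b :=
  rk_lt_rk ha hb (by simpa using hab)

lemma rk_succ {S : Finset (Fin K)} {a b : Fin K}
    (ha : a ∈ S) (hb : b ∈ S) (hab : (a : ℕ) + 1 = (b : ℕ)) :
    rk S 1 b = rk S 1 a + 1 := by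
  have hfb : (S.filter fun j => (1 : Equiv.Perm (Fin K)) j ≤ (1 : Equiv.Perm (Fin K)) b)
      = insert b (S.filter fun j => (1 : Equiv.Perm (Fin K)) j ≤ (1 : Equiv.Perm (Fin K)) a) := by
    ext x
    simp only [Finset.mem_filter, Finset.mem_insert, Equiv.Perm.one_apply, Fin.le_def,
      Fin.ext_iff]
    constructor
    · rintro ⟨hx, hxb⟩
      by_cases hxa : (x : ℕ) ≤ (a : ℕ)
      · exact Or.inr ⟨hx, hxa⟩
      · exact Or.inl (by omega)
    · rintro (hx | ⟨hx, hxa⟩)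
      · exact ⟨by rwa [show x = b from Fin.ext hx], by omega⟩
      · exact ⟨hx, by omega⟩
  rw [rk, rk, hfb, Finset.card_insert_of_notMem]
  simp only [Finset.mem_filter, Equiv.Perm.one_apply, not_and, Fin.le_def]
  intro _
  omega

lemma rk_top {S : Finset (Fin K)} {b : Fin K} (hb : b ∈ S) (htop : ∀ x ∈ S, x ≤ b) :
    rk S 1 b = S.card := by
  rw [rk]
  congr 1
  apply Finset.filter_true_of_mem
  intro x hx
  simpa using htop x hx

lemma rk_cast_sum (S : Finset (Fin K)) (σ : Equiv.Perm (Fin K)) (i : Fin K) :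
    ((rk S σ i : ℕ) : ℝ) = ∑ j ∈ S, (if σ j ≤ σ i then (1:ℝ) else 0) := by
  rw [rk, Finset.card_filter]
  push_cast
  rfl

lemma sum_rank_eq_ISum (p : ℝ) {S : Finset (Fin K)} (σ : Equiv.Perm (Fin K)) :
    ∑ i ∈ S, p ^ (rk S 1 i - 1) * (((rk S σ i : ℕ) : ℝ) - ((rk S 1 i : ℕ) : ℝ))
      = ISum p S σ := by
  have expand : ∀ i ∈ S,
      p ^ (rk S 1 i - 1) * (((rk S σ i : ℕ) : ℝ) - ((rk S 1 i : ℕ) : ℝ))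
      = ∑ j ∈ S, ((if i < j ∧ σ j < σ i then p ^ (rk S 1 i - 1) else 0)
          - (if j < i ∧ σ i < σ j then p ^ (rk S 1 i - 1) else 0)) := by
    intro i _
    rw [rk_cast_sum S σ i, rk_cast_sum S 1 i, ← Finset.sum_sub_distrib,
      Finset.mul_sum]
    apply Finset.sum_congr rfl
    intro j _
    have h1 : (1 : Equiv.Perm (Fin K)) j ≤ (1 : Equiv.Perm (Fin K)) i ↔ j ≤ i := by simp
    by_cases hij : i = j
    · subst hij; simp
    have hσ : σ i ≠ σ j := fun h => hij (σ.injective h)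
    rcases lt_trichotomy i j with h | h | h
    · rcases lt_or_gt_of_ne hσ with hs | hs
      · simp [h1, not_le.2 h, h, hs, hs.le, not_lt.2 h.le, not_lt.2 hs.le] <;> ring
      · simp [h1, not_le.2 h, h, hs, not_lt.2 hs.le, not_le.2 hs, not_lt.2 h.le]
    · exact absurd h hij
    · rcases lt_or_gt_of_ne hσ with hs | hs
      · simp [h1, h.le, h, hs, not_lt.2 h.le, not_lt.2 hs.le, not_le.2 hs] <;> ring
      · simp [h1, h.le, h, hs, hs.le, not_lt.2 h.le, not_lt.2 hs.le] <;> ring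
  rw [Finset.sum_congr rfl expand]
  simp only [Finset.sum_sub_distrib]
  have swap : (∑ i ∈ S, ∑ j ∈ S, (if i < j ∧ σ j < σ i then p ^ (rk S 1 i - 1) else 0))
      = ∑ i ∈ S, ∑ j ∈ S, (if j < i ∧ σ i < σ j then p ^ (rk S 1 j - 1) else 0) := by
    rw [Finset.sum_comm]
  rw [swap, ← Finset.sum_sub_distrib, ISum]
  apply Finset.sum_congr rfl
  intro i _
  rw [← Finset.sum_sub_distrib]
  apply Finset.sum_congr rfl
  intro j _
  by_cases h : j < i ∧ σ i < σ j <;> simp [h]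

lemma dS_eq {p : ℝ} (hp0 : 0 < p) (hp1 : p < 1) {S : Finset (Fin K)} (hS : S.Nonempty)
    (σ : Equiv.Perm (Fin K)) :
    dS p S σ = Real.log (1/p) * ((1 - p)/(1 - p ^ S.card)) * ISum p S σ := by
  have h1p : (0:ℝ) < 1 - p := by linarith
  have hm : S.card ≠ 0 := Finset.card_ne_zero.2 hS
  have hpm : (0:ℝ) < 1 - p ^ S.card := by
    have : p ^ S.card < 1 := pow_lt_one₀ hp0.le hp1 hm
    linarith
  have key : ∀ i ∈ S, oa p 1 S i * Real.log (oa p 1 S i / oa p σ S i)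
      = Real.log (1/p) * ((1 - p)/(1 - p ^ S.card))
        * (p ^ (rk S 1 i - 1) * (((rk S σ i : ℕ) : ℝ) - ((rk S 1 i : ℕ) : ℝ))) := by
    intro i hi
    have hr1 : 1 ≤ rk S 1 i := rk_pos hi
    have hrσ : 1 ≤ rk S σ i := rk_pos hi
    have hratio : oa p 1 S i / oa p σ S i = p ^ (rk S 1 i - 1) / p ^ (rk S σ i - 1) := by
      rw [oa, oa]
      show (1 - p) * p ^ (rk S 1 i - 1) / (1 - p ^ S.card)
          / ((1 - p) * p ^ (rk S σ i - 1) / (1 - p ^ S.card)) = _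
      rw [div_div_div_cancel_right₀]
      · rw [mul_div_mul_left _ _ (ne_of_gt h1p)]
      · exact ne_of_gt hpm
    have hlog : Real.log (oa p 1 S i / oa p σ S i)
        = (((rk S 1 i : ℕ) : ℝ) - ((rk S σ i : ℕ) : ℝ)) * Real.log p := by
      rw [hratio, Real.log_div (pow_ne_zero _ (ne_of_gt hp0)) (pow_ne_zero _ (ne_of_gt hp0)),
        Real.log_pow, Real.log_pow]
      rw [Nat.cast_sub hr1, Nat.cast_sub hrσ]
      push_cast
      ring
    rw [hlog]
    show (1 - p) * p ^ (rk S 1 i - 1) / (1 - p ^ S.card) * _ = _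
    rw [one_div, Real.log_inv]
    ring
  rw [dS, Finset.sum_congr rfl key, ← Finset.mul_sum, sum_rank_eq_ISum]

lemma ISum_term_nonneg (hp0 : 0 < p) (hp1 : p < 1) {S : Finset (Fin K)}
    (σ : Equiv.Perm (Fin K)) {i : Fin K} (hi : i ∈ S) : ∀ j ∈ S,
    0 ≤ (if j < i ∧ σ i < σ j then p ^ (rk S 1 j - 1) - p ^ (rk S 1 i - 1) else 0) := by
  intro j hj
  split_ifs with h
  · have hlt : rk S 1 j < rk S 1 i := rk_one_lt hj hi h.1
    have : p ^ (rk S 1 i - 1) ≤ p ^ (rk S 1 j - 1) :=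
      pow_le_pow_of_le_one hp0.le hp1.le (by omega)
    linarith
  · exact le_refl 0

lemma ISum_nonneg (hp0 : 0 < p) (hp1 : p < 1) (S : Finset (Fin K))
    (σ : Equiv.Perm (Fin K)) : 0 ≤ ISum p S σ :=
  Finset.sum_nonneg fun i hi => Finset.sum_nonneg (ISum_term_nonneg hp0 hp1 σ hi)

lemma ISum_ge_single (hp0 : 0 < p) (hp1 : p < 1) {S : Finset (Fin K)}
    {σ : Equiv.Perm (Fin K)} {a b : Fin K} (ha : a ∈ S) (hb : b ∈ S)
    (hab : a < b) (hσ : σ b < σ a) :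
    p ^ (rk S 1 a - 1) - p ^ (rk S 1 b - 1) ≤ ISum p S σ := by
  have hinner : p ^ (rk S 1 a - 1) - p ^ (rk S 1 b - 1)
      ≤ ∑ j ∈ S, (if j < b ∧ σ b < σ j then p ^ (rk S 1 j - 1) - p ^ (rk S 1 b - 1) else 0) := by
    have := Finset.single_le_sum (ISum_term_nonneg hp0 hp1 σ hb) ha
    simpa [hab, hσ] using this
  refine hinner.trans ?_
  exact Finset.single_le_sum
    (fun i hi => Finset.sum_nonneg (ISum_term_nonneg hp0 hp1 σ hi)) hb

lemma swap_inv_iff {a b i j : Fin K} (hab : (a : ℕ) + 1 = (b : ℕ)) :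
    (j < i ∧ Equiv.swap a b i < Equiv.swap a b j) ↔ (i = b ∧ j = a) := by
  constructor
  · rintro ⟨hji, hσ⟩
    rw [Equiv.swap_apply_def, Equiv.swap_apply_def] at hσ
    rw [Fin.lt_def] at hji
    split_ifs at hσ <;>
      (simp only [Fin.ext_iff, Fin.lt_def] at *; omega)
  · rintro ⟨rfl, rfl⟩
    simp only [Equiv.swap_apply_left, Equiv.swap_apply_right, Fin.lt_def]
    omega

lemma ISum_swap (hp0 : 0 < p) {S : Finset (Fin K)} {a b : Fin K}
    (hab : (a : ℕ) + 1 = (b : ℕ)) :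
    ISum p S (Equiv.swap a b)
      = if a ∈ S ∧ b ∈ S then p ^ (rk S 1 a - 1) - p ^ (rk S 1 b - 1) else 0 := by
  rw [ISum]
  have step1 : ∀ i ∈ S, (∑ j ∈ S, (if j < i ∧ Equiv.swap a b i < Equiv.swap a b j
        then p ^ (rk S 1 j - 1) - p ^ (rk S 1 i - 1) else 0))
      = (if i = b then (if a ∈ S then p ^ (rk S 1 a - 1) - p ^ (rk S 1 i - 1) else 0) else 0) := by
    intro i _
    have : ∀ j ∈ S, (if j < i ∧ Equiv.swap a b i < Equiv.swap a b j
          then p ^ (rk S 1 j - 1) - p ^ (rk S 1 i - 1) else 0)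
        = (if i = b then (if j = a then p ^ (rk S 1 j - 1) - p ^ (rk S 1 i - 1) else 0) else 0) := by
      intro j _
      by_cases h : i = b ∧ j = a
      · rw [if_pos ((swap_inv_iff hab).2 h), if_pos h.1, if_pos h.2]
      · rw [if_neg (fun hc => h ((swap_inv_iff hab).1 hc))]
        rcases not_and_or.1 h with h1 | h2
        · rw [if_neg h1]
        · by_cases h1 : i = b
          · rw [if_pos h1, if_neg h2]
          · rw [if_neg h1]
    rw [Finset.sum_congr rfl this]
    by_cases h1 : i = b
    · simp only [h1, if_true]
      rw [Finset.sum_ite_eq' S a]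
    · simp [h1]
  rw [Finset.sum_congr rfl step1]
  rw [Finset.sum_ite_eq' S b]
  by_cases h1 : b ∈ S <;> by_cases h2 : a ∈ S <;> simp [h1, h2]

lemma mem_tailSet {n : ℕ} {i : Fin K} : i ∈ tailSet K n ↔ n ≤ (i : ℕ) := by
  simp [tailSet]

lemma card_tailSet {n : ℕ} (hn : n ≤ K) : (tailSet K n).card = K - n := by
  rcases Nat.eq_zero_or_pos K with rfl | hK0
  · simp [tailSet]
  rw [show K - n = (Finset.Ico n K).card by rw [Nat.card_Ico]]
  apply Finset.card_nbij' (fun j : Fin K => (j : ℕ)) (fun m => ⟨m % K, Nat.mod_lt _ hK0⟩)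
  · intro x hx
    rw [Finset.mem_coe, mem_tailSet] at hx
    exact Finset.mem_coe.2 (Finset.mem_Ico.2 ⟨hx, x.isLt⟩)
  · intro m hm
    rw [Finset.mem_coe, Finset.mem_Ico] at hm
    rw [Finset.mem_coe, mem_tailSet]
    show n ≤ m % K
    rw [Nat.mod_eq_of_lt hm.2]; exact hm.1
  · intro x _
    exact Fin.ext (by simp [Nat.mod_eq_of_lt x.isLt])
  · intro m hm
    rw [Finset.mem_coe, Finset.mem_Ico] at hm
    show m % K = m
    exact Nat.mod_eq_of_lt hm.2

lemma rk_tailSet {n : ℕ} {i : Fin K} (hi : n ≤ (i : ℕ)) :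
    rk (tailSet K n) 1 i = (i : ℕ) - n + 1 := by
  rw [rk]
  rw [show (i : ℕ) - n + 1 = (Finset.Icc n (i : ℕ)).card by rw [Nat.card_Icc]; omega]
  apply Finset.card_nbij' (fun j : Fin K => (j : ℕ)) (fun m => ⟨m % K, Nat.mod_lt _ i.pos⟩)
  · intro x hx
    rw [Finset.mem_coe, Finset.mem_filter, mem_tailSet] at hx
    refine Finset.mem_coe.2 (Finset.mem_Icc.2 ⟨hx.1, ?_⟩)
    exact Fin.le_def.1 hx.2
  · intro m hm
    rw [Finset.mem_coe, Finset.mem_Icc] at hm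
    have hmK : m < K := lt_of_le_of_lt hm.2 i.isLt
    refine Finset.mem_coe.2 (Finset.mem_filter.2 ⟨mem_tailSet.2 ?_, ?_⟩)
    · show n ≤ m % K
      rw [Nat.mod_eq_of_lt hmK]; exact hm.1
    · show (⟨m % K, _⟩ : Fin K) ≤ i
      rw [Fin.le_def]
      show m % K ≤ (i : ℕ)
      rw [Nat.mod_eq_of_lt hmK]; exact hm.2
  · intro x _
    exact Fin.ext (by simp [Nat.mod_eq_of_lt x.isLt])
  · intro m hm
    rw [Finset.mem_coe, Finset.mem_Icc] at hm
    have hmK : m < K := lt_of_le_of_lt hm.2 i.isLt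
    simp [Nat.mod_eq_of_lt hmK]

lemma tailSet_mem_filter (hK : 2 ≤ K) {n : ℕ} (hn : n ≤ K - 2)
    (hcard : (tailSet K n).card = K - n) :
    tailSet K n ∈ Finset.univ.filter (fun S : Finset (Fin K) => 2 ≤ S.card) := by
  rw [Finset.mem_filter]
  refine ⟨Finset.mem_univ _, ?_⟩
  rw [hcard]; omega

/-- Generic reduction of the weighted sum over all display sets to tail sets. -/
lemma sum_lamStar_mul (hK : 2 ≤ K)
    (hcard : ∀ n ≤ K - 2, (tailSet K n).card = K - n)
    (g : Finset (Fin K) → ℝ) :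
    ∑ S ∈ Finset.univ.filter (fun S : Finset (Fin K) => 2 ≤ S.card), lamStar p K S * g S
      = (1 - p ^ K) / ((1 - p) * ((K : ℝ) - 1 + p)) * g (tailSet K 0)
        + ∑ n ∈ Finset.Icc 1 (K - 2),
            (1 - p ^ (K - n)) / ((K : ℝ) - 1 + p) * g (tailSet K n) := by
  simp only [lamStar, add_mul, Finset.sum_mul]
  rw [Finset.sum_add_distrib]
  congr 1
  · simp only [ite_mul, zero_mul]
    rw [Finset.sum_ite_eq' _ (tailSet K 0)]
    rw [if_pos (tailSet_mem_filter hK (by omega) (hcard 0 (by omega)))]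
  · rw [Finset.sum_comm]
    apply Finset.sum_congr rfl
    intro n hn
    rw [Finset.mem_Icc] at hn
    simp only [ite_mul, zero_mul]
    rw [Finset.sum_ite_eq' _ (tailSet K n)]
    rw [if_pos (tailSet_mem_filter hK hn.2 (hcard n hn.2))]

/-- Telescoping sum. -/
lemma tele (p : ℝ) (i : ℕ) :
    ∑ n ∈ Finset.Icc 1 i, (p ^ (i - n) - p ^ (i - n + 1)) = 1 - p ^ i := by
  rw [Finset.sum_nbij' (i := fun n => i - n) (j := fun t => i - t)
    (t := Finset.range i) (g := fun t => p ^ t - p ^ (t + 1))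
    (by intro n hn; rw [Finset.mem_Icc] at hn; rw [Finset.mem_range]; show i - n < i; omega)
    (by intro t ht; rw [Finset.mem_range] at ht; rw [Finset.mem_Icc]; show 1 ≤ i - t ∧ i - t ≤ i; omega)
    (by intro n hn; rw [Finset.mem_Icc] at hn; show i - (i - n) = n; omega)
    (by intro t ht; rw [Finset.mem_range] at ht; show i - (i - t) = t; omega)
    (by intro n hn; rfl)]
  rw [Finset.sum_range_sub' (f := fun t => p ^ t)]
  simp

/-- Sum of the allocation weights over tail indices. -/
lemma sum_pow_sub (q : ℝ) (M j : ℕ) (hj : j ≤ M) :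
    ∑ n ∈ Finset.Icc 1 j, q ^ (M - n) = ∑ t ∈ Finset.Ico (M - j) M, q ^ t := by
  apply Finset.sum_nbij' (i := fun n => M - n) (j := fun t => M - t)
  · intro n hn; rw [Finset.mem_Icc] at hn; rw [Finset.mem_Ico]; omega
  · intro t ht; rw [Finset.mem_Ico] at ht; rw [Finset.mem_Icc]; omega
  · intro n hn; rw [Finset.mem_Icc] at hn; omega
  · intro t ht; rw [Finset.mem_Ico] at ht; omega
  · intro n hn; rfl

lemma exists_descent (hK : 2 ≤ K) (σ : Equiv.Perm (Fin K)) (hσ : σ ≠ 1) :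
    ∃ i : ℕ, ∃ h1 : i + 1 < K, σ ⟨i + 1, h1⟩ < σ ⟨i, Nat.lt_of_succ_lt h1⟩ := by
  by_contra h
  push_neg at h
  apply hσ
  obtain ⟨K', rfl⟩ : ∃ K', K = K' + 1 := ⟨K - 1, by omega⟩
  have hmono : StrictMono σ := by
    rw [Fin.strictMono_iff_lt_succ]
    intro i
    have h2 : (i : ℕ) + 1 < K' + 1 := by omega
    have := h (i : ℕ) h2
    have hne : σ ⟨(i : ℕ), Nat.lt_of_succ_lt h2⟩ ≠ σ ⟨(i : ℕ) + 1, h2⟩ :=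
      fun hc => by
        have := σ.injective hc
        rw [Fin.ext_iff] at this
        simp at this
    have hcs : (Fin.castSucc i) = (⟨(i : ℕ), Nat.lt_of_succ_lt h2⟩ : Fin (K' + 1)) := rfl
    have hsc : (i.succ) = (⟨(i : ℕ) + 1, h2⟩ : Fin (K' + 1)) := rfl
    rw [hcs, hsc]
    exact lt_of_le_of_ne this hne
  have : ⇑σ = id := by
    apply (hmono.range_inj (strictMono_id : StrictMono (id : Fin (K' + 1) → Fin (K' + 1)))).1
    rw [Set.range_id, Set.range_eq_univ]
    exact σ.surjective
  exact Equiv.ext fun x => congrFun this x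

lemma Kp_pos (hp0 : 0 < p) (hK : 2 ≤ K) : (0:ℝ) < (K : ℝ) - 1 + p := by
  have h2 : (2:ℝ) ≤ (K:ℝ) := by exact_mod_cast hK
  linarith

lemma log_nonneg' (hp0 : 0 < p) (hp1 : p < 1) : 0 ≤ Real.log (1/p) :=
  Real.log_nonneg (by rw [le_div_iff₀ hp0]; linarith)

lemma tail_nonempty (hK : 2 ≤ K) {n : ℕ} (hn : n ≤ K - 2) : (tailSet K n).Nonempty := by
  rw [← Finset.card_pos, card_tailSet (by omega)]
  omega

lemma V_eq (hp0 : 0 < p) (hp1 : p < 1) (hK : 2 ≤ K) (σ : Equiv.Perm (Fin K)) :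
    ∑ S ∈ Finset.univ.filter (fun S : Finset (Fin K) => 2 ≤ S.card), lamStar p K S * dS p S σ
      = Real.log (1/p) / ((K : ℝ) - 1 + p) * (ISum p (tailSet K 0) σ
          + (1 - p) * ∑ n ∈ Finset.Icc 1 (K - 2), ISum p (tailSet K n) σ) := by
  have hKp := Kp_pos hp0 hK
  have h1p : (0:ℝ) < 1 - p := by linarith
  have hcard : ∀ n ≤ K - 2, (tailSet K n).card = K - n := fun n _ => card_tailSet (by omega)
  rw [sum_lamStar_mul hK hcard]
  have hpow : ∀ n ≤ K - 2, (0:ℝ) < 1 - p ^ (K - n) := by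
    intro n hn
    have : p ^ (K - n) < 1 := pow_lt_one₀ hp0.le hp1 (by omega)
    linarith
  have h0 : (1 - p ^ K) / ((1 - p) * ((K : ℝ) - 1 + p)) * dS p (tailSet K 0) σ
      = Real.log (1/p) / ((K : ℝ) - 1 + p) * ISum p (tailSet K 0) σ := by
    rw [dS_eq hp0 hp1 (tail_nonempty hK (by omega)) σ, hcard 0 (by omega)]
    have h1 := hpow 0 (by omega)
    rw [Nat.sub_zero] at h1 ⊢
    field_simp
  have hterm : ∀ n ∈ Finset.Icc 1 (K - 2),
      (1 - p ^ (K - n)) / ((K : ℝ) - 1 + p) * dS p (tailSet K n) σ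
      = Real.log (1/p) / ((K : ℝ) - 1 + p) * ((1 - p) * ISum p (tailSet K n) σ) := by
    intro n hn
    rw [Finset.mem_Icc] at hn
    rw [dS_eq hp0 hp1 (tail_nonempty hK hn.2) σ, hcard n hn.2]
    have h1 := hpow n hn.2
    field_simp
  rw [Finset.sum_congr rfl hterm, h0, ← Finset.mul_sum, ← Finset.mul_sum]
  ring

lemma V_ge (hp0 : 0 < p) (hp1 : p < 1) (hK : 2 ≤ K) {σ : Equiv.Perm (Fin K)} (hσ : σ ≠ 1) :
    Real.log (1/p) * (1 - p) / ((K : ℝ) - 1 + p)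
      ≤ ∑ S ∈ Finset.univ.filter (fun S : Finset (Fin K) => 2 ≤ S.card),
          lamStar p K S * dS p S σ := by
  obtain ⟨i, h1, hinv⟩ := exists_descent hK σ hσ
  rw [V_eq hp0 hp1 hK σ]
  have hKp := Kp_pos hp0 hK
  have h1p : (0:ℝ) < 1 - p := by linarith
  have hL := log_nonneg' hp0 hp1
  set a : Fin K := ⟨i, Nat.lt_of_succ_lt h1⟩ with ha_def
  set b : Fin K := ⟨i + 1, h1⟩ with hb_def
  have hi2 : i ≤ K - 2 := by omega
  have hab : a < b := by rw [Fin.lt_def]; exact Nat.lt_succ_self i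
  have hD0 : p ^ i - p ^ (i + 1) ≤ ISum p (tailSet K 0) σ := by
    have ha : a ∈ tailSet K 0 := mem_tailSet.2 (Nat.zero_le _)
    have hb : b ∈ tailSet K 0 := mem_tailSet.2 (Nat.zero_le _)
    have h := ISum_ge_single hp0 hp1 ha hb hab hinv
    rw [rk_tailSet (Nat.zero_le _), rk_tailSet (Nat.zero_le _)] at h
    have e1 : ((a : ℕ) - 0 + 1) - 1 = i := by simp [ha_def]
    have e2 : ((b : ℕ) - 0 + 1) - 1 = i + 1 := by simp [hb_def]
    rwa [e1, e2] at h
  have hsum : 1 - p ^ i ≤ ∑ n ∈ Finset.Icc 1 (K - 2), ISum p (tailSet K n) σ := by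
    have key : ∀ n ∈ Finset.Icc 1 (K - 2),
        (if n ≤ i then p ^ (i - n) - p ^ (i - n + 1) else 0) ≤ ISum p (tailSet K n) σ := by
      intro n hn
      rw [Finset.mem_Icc] at hn
      split_ifs with hni
      · have ha : a ∈ tailSet K n := mem_tailSet.2 (by simp [ha_def]; omega)
        have hb : b ∈ tailSet K n := mem_tailSet.2 (by simp [hb_def]; omega)
        have h := ISum_ge_single hp0 hp1 ha hb hab hinv
        rw [rk_tailSet (by simp [ha_def]; omega), rk_tailSet (by simp [hb_def]; omega)] at h
        have e1 : ((a : ℕ) - n + 1) - 1 = i - n := by simp [ha_def]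
        have e2 : ((b : ℕ) - n + 1) - 1 = i - n + 1 := by simp [hb_def]; omega
        rwa [e1, e2] at h
      · exact ISum_nonneg hp0 hp1 _ _
    calc 1 - p ^ i = ∑ n ∈ Finset.Icc 1 i, (p ^ (i - n) - p ^ (i - n + 1)) := (tele p i).symm
      _ = ∑ n ∈ Finset.Icc 1 (K - 2), (if n ≤ i then p ^ (i - n) - p ^ (i - n + 1) else 0) := by
          rw [← Finset.sum_filter]
          congr 1
          ext x
          simp only [Finset.mem_filter, Finset.mem_Icc]
          omega
      _ ≤ _ := Finset.sum_le_sum key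
  have hinner : 1 - p ≤ ISum p (tailSet K 0) σ
      + (1 - p) * ∑ n ∈ Finset.Icc 1 (K - 2), ISum p (tailSet K n) σ := by
    have h2 : (1 - p) * (1 - p ^ i)
        ≤ (1 - p) * ∑ n ∈ Finset.Icc 1 (K - 2), ISum p (tailSet K n) σ :=
      mul_le_mul_of_nonneg_left hsum h1p.le
    have h3 : (p ^ i - p ^ (i + 1)) + (1 - p) * (1 - p ^ i) = 1 - p := by
      rw [pow_succ]; ring
    linarith
  calc Real.log (1/p) * (1 - p) / ((K : ℝ) - 1 + p)
      = Real.log (1/p) / ((K : ℝ) - 1 + p) * (1 - p) := by ring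
    _ ≤ _ := mul_le_mul_of_nonneg_left hinner (by positivity)

lemma V_swap_eq (hp0 : 0 < p) (hp1 : p < 1) (hK : 2 ≤ K) :
    ∑ S ∈ Finset.univ.filter (fun S : Finset (Fin K) => 2 ≤ S.card),
        lamStar p K S * dS p S (Equiv.swap (⟨K - 2, by omega⟩ : Fin K) ⟨K - 1, by omega⟩)
      = Real.log (1/p) * (1 - p) / ((K : ℝ) - 1 + p) := by
  have hKp := Kp_pos hp0 hK
  set a : Fin K := ⟨K - 2, by omega⟩ with ha_def
  set b : Fin K := ⟨K - 1, by omega⟩ with hb_def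
  have hab : (a : ℕ) + 1 = (b : ℕ) := by simp [ha_def, hb_def]; omega
  rw [V_eq hp0 hp1 hK _]
  have hval : ∀ n ≤ K - 2, ISum p (tailSet K n) (Equiv.swap a b)
      = p ^ (K - 2 - n) - p ^ (K - 2 - n + 1) := by
    intro n hn
    rw [ISum_swap hp0 hab]
    have ha : a ∈ tailSet K n := mem_tailSet.2 (by simp [ha_def]; omega)
    have hb : b ∈ tailSet K n := mem_tailSet.2 (by simp [hb_def]; omega)
    rw [if_pos ⟨ha, hb⟩, rk_tailSet (by simp [ha_def]; omega), rk_tailSet (by simp [hb_def]; omega)]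
    have e1 : ((a : ℕ) - n + 1) - 1 = K - 2 - n := by simp [ha_def]
    have e2 : ((b : ℕ) - n + 1) - 1 = K - 2 - n + 1 := by simp [hb_def]; omega
    rw [e1, e2]
  have h0 : ISum p (tailSet K 0) (Equiv.swap a b) = p ^ (K - 2) - p ^ (K - 2 + 1) := by
    have := hval 0 (by omega)
    simpa using this
  have hsum : ∑ n ∈ Finset.Icc 1 (K - 2), ISum p (tailSet K n) (Equiv.swap a b)
      = 1 - p ^ (K - 2) := by
    rw [Finset.sum_congr rfl (fun n hn => hval n (Finset.mem_Icc.1 hn).2), tele p (K - 2)]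
  rw [h0, hsum]
  have : (p ^ (K - 2) - p ^ (K - 2 + 1)) + (1 - p) * (1 - p ^ (K - 2)) = 1 - p := by
    rw [pow_succ]; ring
  rw [this]
  ring

lemma lamStar_sum_one (hp0 : 0 < p) (hp1 : p < 1) (hK : 2 ≤ K) :
    ∑ S ∈ Finset.univ.filter (fun S : Finset (Fin K) => 2 ≤ S.card), lamStar p K S = 1 := by
  have hKp := Kp_pos hp0 hK
  have h1p : (0:ℝ) < 1 - p := by linarith
  have hcard : ∀ n ≤ K - 2, (tailSet K n).card = K - n := fun n _ => card_tailSet (by omega)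
  have := sum_lamStar_mul (p := p) hK hcard (fun _ => (1:ℝ))
  simp only [mul_one] at this
  rw [this]
  have h2 : ∑ n ∈ Finset.Icc 1 (K - 2), ((1:ℝ) - p ^ (K - n)) / ((K : ℝ) - 1 + p)
      = (((K:ℝ) - 2) - ((1 - p ^ K) / (1 - p) - (1 + p))) / ((K : ℝ) - 1 + p) := by
    rw [← Finset.sum_div]
    congr 1
    rw [Finset.sum_sub_distrib, Finset.sum_const, Nat.card_Icc]
    have hc : ((K - 2 + 1 - 1 : ℕ) : ℝ) = (K : ℝ) - 2 := by
      rw [show K - 2 + 1 - 1 = K - 2 from rfl]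
      rw [Nat.cast_sub hK]; norm_num
    rw [nsmul_eq_mul, hc, sum_pow_sub p K (K - 2) (by omega),
      show K - (K - 2) = 2 from by omega,
      Finset.sum_Ico_eq_sub (fun t => p ^ t) (by omega : 2 ≤ K)]
    have hgeom : ∑ t ∈ Finset.range K, p ^ t = (1 - p ^ K) / (1 - p) := by
      rw [geom_sum_eq (by linarith : p ≠ 1)]
      rw [div_eq_div_iff (by linarith) (by linarith)]
      ring
    have h2r : ∑ t ∈ Finset.range 2, p ^ t = 1 + p := by
      simp [Finset.sum_range_succ]
    rw [hgeom, h2r]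
    ring
  rw [h2]
  field_simp
  ring

lemma lamStar_nonneg (hp0 : 0 < p) (hp1 : p < 1) (hK : 2 ≤ K) (S : Finset (Fin K)) :
    0 ≤ lamStar p K S := by
  have hKp := Kp_pos hp0 hK
  have h1p : (0:ℝ) < 1 - p := by linarith
  rw [lamStar]
  apply add_nonneg
  · split_ifs
    · apply div_nonneg
      · have : p ^ K ≤ 1 := pow_le_one₀ hp0.le hp1.le
        linarith
      · positivity
    · exact le_refl 0
  · apply Finset.sum_nonneg
    intro n _
    split_ifs
    · apply div_nonneg
      · have : p ^ (K - n) ≤ 1 := pow_le_one₀ hp0.le hp1.le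
        linarith
      · linarith
    · exact le_refl 0

lemma dS_nonneg (hp0 : 0 < p) (hp1 : p < 1) {S : Finset (Fin K)} (hS : S.Nonempty)
    (σ : Equiv.Perm (Fin K)) : 0 ≤ dS p S σ := by
  rw [dS_eq hp0 hp1 hS σ]
  have hm : (0:ℝ) < 1 - p ^ S.card := by
    have : p ^ S.card < 1 := pow_lt_one₀ hp0.le hp1 (Finset.card_ne_zero.2 hS)
    linarith
  have hI := ISum_nonneg hp0 hp1 S σ
  have hL := log_nonneg' hp0 hp1
  exact mul_nonneg (mul_nonneg hL (div_nonneg (by linarith) hm.le)) hI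

lemma perS (hp0 : 0 < p) (hp1 : p < 1) {K' : ℕ} {S : Finset (Fin (K' + 2))}
    (hS : 2 ≤ S.card) :
    ∑ i : Fin (K' + 1), ((1 + if i = Fin.last K' then p else 0) *
        ISum p S (Equiv.swap i.castSucc i.succ))
      ≤ (1 - p) * ∑ t ∈ Finset.range S.card, p ^ t := by
  have h1p : (0:ℝ) < 1 - p := by linarith
  have hterm : ∀ i : Fin (K' + 1), ISum p S (Equiv.swap i.castSucc i.succ)
      = if i.castSucc ∈ S ∧ i.succ ∈ S
          then (1 - p) * p ^ (rk S 1 i.castSucc - 1) else 0 := by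
    intro i
    rw [ISum_swap hp0 (by simp : ((i.castSucc : ℕ) + 1 = (i.succ : ℕ)))]
    split_ifs with h
    · rw [rk_succ h.1 h.2 (by simp)]
      have hr := rk_pos (σ := 1) h.1
      rw [show rk S 1 i.castSucc + 1 - 1 = (rk S 1 i.castSucc - 1) + 1 from by omega, pow_succ]
      ring
    · rfl
  simp only [hterm]
  rw [show (∑ i : Fin (K' + 1), ((1 + if i = Fin.last K' then p else 0) *
        if i.castSucc ∈ S ∧ i.succ ∈ S
          then (1 - p) * p ^ (rk S 1 i.castSucc - 1) else 0))
      = ∑ i ∈ Finset.univ.filter (fun i : Fin (K' + 1) => i.castSucc ∈ S ∧ i.succ ∈ S),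
          ((1 + if i = Fin.last K' then p else 0) * ((1 - p) * p ^ (rk S 1 i.castSucc - 1)))
    from by rw [Finset.sum_filter]; apply Finset.sum_congr rfl; intro i _
            by_cases h : i.castSucc ∈ S ∧ i.succ ∈ S <;> simp [h]]
  set A := Finset.univ.filter (fun i : Fin (K' + 1) => i.castSucc ∈ S ∧ i.succ ∈ S) with hA
  have hmemA : ∀ i ∈ A, i.castSucc ∈ S ∧ i.succ ∈ S := by
    intro i hi; rw [hA, Finset.mem_filter] at hi; exact hi.2
  have hφlt : ∀ i ∈ A, rk S 1 i.castSucc - 1 ≤ S.card - 2 := by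
    intro i hi
    obtain ⟨h1, h2⟩ := hmemA i hi
    have ha1 := rk_one_lt h1 h2 Fin.castSucc_lt_succ
    have ha2 := rk_le (S := S) 1 i.succ
    have ha3 := rk_pos (σ := (1 : Equiv.Perm (Fin (K' + 2)))) h1
    omega
  have hinj : ∀ i ∈ A, ∀ j ∈ A, rk S 1 i.castSucc - 1 = rk S 1 j.castSucc - 1 → i = j := by
    intro i hi j hj hphi
    by_contra hne
    have h1 := rk_pos (σ := (1 : Equiv.Perm (Fin (K' + 2)))) (hmemA i hi).1
    have h2 := rk_pos (σ := (1 : Equiv.Perm (Fin (K' + 2)))) (hmemA j hj).1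
    rcases lt_trichotomy i j with h | h | h
    · have := rk_one_lt (hmemA i hi).1 (hmemA j hj).1 (Fin.castSucc_lt_castSucc_iff.2 h)
      omega
    · exact hne h
    · have := rk_one_lt (hmemA j hj).1 (hmemA i hi).1 (Fin.castSucc_lt_castSucc_iff.2 h)
      omega
  by_cases hlast : Fin.last K' ∈ A
  · -- the top pair is present
    have hrk_top : rk S 1 (Fin.last K').succ = S.card := by
      apply rk_top (hmemA _ hlast).2
      intro x _
      have : (x : ℕ) ≤ K' + 1 := by omega
      rw [Fin.le_def]; simpa using this
    have hrk_pen : rk S 1 (Fin.last K').castSucc = S.card - 1 := by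
      have := rk_succ (hmemA _ hlast).1 (hmemA _ hlast).2 (by simp)
      omega
    have hφsm : ∀ i ∈ A.erase (Fin.last K'), rk S 1 i.castSucc - 1 < S.card - 2 := by
      intro i hi
      rw [Finset.mem_erase] at hi
      have hlt : i < Fin.last K' := lt_of_le_of_ne (Fin.le_last i) hi.1
      have := rk_one_lt (hmemA i hi.2).1 (hmemA _ hlast).1 (Fin.castSucc_lt_castSucc_iff.2 hlt)
      have h1 := rk_pos (σ := (1 : Equiv.Perm (Fin (K' + 2)))) (hmemA i hi.2).1
      omega
    rw [← Finset.sum_erase_add _ _ hlast]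
    have hbound1 : ∑ i ∈ A.erase (Fin.last K'),
        ((1 + if i = Fin.last K' then p else 0) * ((1 - p) * p ^ (rk S 1 i.castSucc - 1)))
        ≤ (1 - p) * ∑ t ∈ Finset.range (S.card - 2), p ^ t := by
      have heq1 : ∀ i ∈ A.erase (Fin.last K'),
          ((1 + if i = Fin.last K' then p else 0) * ((1 - p) * p ^ (rk S 1 i.castSucc - 1)))
          = (1 - p) * p ^ (rk S 1 i.castSucc - 1) := by
        intro i hi
        rw [Finset.mem_erase] at hi
        rw [if_neg hi.1]
        ring
      rw [Finset.sum_congr rfl heq1, ← Finset.mul_sum]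
      apply mul_le_mul_of_nonneg_left _ h1p.le
      rw [← Finset.sum_image (g := fun i : Fin (K' + 1) => rk S 1 i.castSucc - 1)
        (f := fun t : ℕ => p ^ t) (s := A.erase (Fin.last K'))
        (fun i hi j hj h => hinj i (Finset.mem_of_mem_erase hi) j (Finset.mem_of_mem_erase hj) h)]
      apply Finset.sum_le_sum_of_subset_of_nonneg
      · intro t ht
        rw [Finset.mem_image] at ht
        obtain ⟨i, hi, rfl⟩ := ht
        rw [Finset.mem_range]
        exact hφsm i hi
      · intro t _ _; positivity
    have hlast_term : ((1 + if Fin.last K' = Fin.last K' then p else 0) *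
        ((1 - p) * p ^ (rk S 1 (Fin.last K').castSucc - 1)))
        = (1 - p) * (p ^ (S.card - 2) + p ^ (S.card - 1)) := by
      rw [if_pos rfl, hrk_pen]
      have heq2 : p ^ (S.card - 1) = p ^ (S.card - 1 - 1) * p := by
        rw [← pow_succ]
        congr 1
        omega
      rw [heq2]
      ring_nf
      rw [show S.card - 1 - 1 = S.card - 2 from by omega]
      ring
    have hsplit : ∑ t ∈ Finset.range S.card, p ^ t
        = ∑ t ∈ Finset.range (S.card - 2), p ^ t + p ^ (S.card - 2) + p ^ (S.card - 1) := by
      rw [show S.card = (S.card - 2) + 1 + 1 from by omega, Finset.sum_range_succ,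
        Finset.sum_range_succ]
      rw [show (S.card - 2) + 1 + 1 - 2 = S.card - 2 from by omega,
        show (S.card - 2) + 1 + 1 - 1 = (S.card - 2) + 1 from by omega]
    rw [hlast_term, hsplit]
    linarith
  · -- the top pair is absent
    have hid : ∀ i ∈ A, ((1 + if i = Fin.last K' then p else 0) *
        ((1 - p) * p ^ (rk S 1 i.castSucc - 1)))
        = (1 - p) * p ^ (rk S 1 i.castSucc - 1) := by
      intro i hi
      rw [if_neg (fun h => hlast (by rwa [h] at hi))]
      ring
    rw [Finset.sum_congr rfl hid, ← Finset.mul_sum]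
    apply mul_le_mul_of_nonneg_left _ h1p.le
    rw [← Finset.sum_image (g := fun i : Fin (K' + 1) => rk S 1 i.castSucc - 1)
      (f := fun t : ℕ => p ^ t) (s := A) hinj]
    apply Finset.sum_le_sum_of_subset_of_nonneg
    · intro t ht
      rw [Finset.mem_image] at ht
      obtain ⟨i, hi, rfl⟩ := ht
      rw [Finset.mem_range]
      exact lt_of_le_of_lt (hφlt i hi) (by omega)
    · intro t _ _; positivity

lemma exists_good_swap (hp0 : 0 < p) (hp1 : p < 1) {K' : ℕ}
    (lam : Finset (Fin (K' + 2)) → ℝ)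
    (hnn : ∀ S : Finset (Fin (K' + 2)), 2 ≤ S.card → 0 ≤ lam S)
    (hsum : (∑ S ∈ Finset.univ.filter (fun S : Finset (Fin (K' + 2)) => 2 ≤ S.card), lam S) = 1) :
    ∃ σ : Equiv.Perm (Fin (K' + 2)), σ ≠ 1 ∧
      (∑ S ∈ Finset.univ.filter (fun S : Finset (Fin (K' + 2)) => 2 ≤ S.card),
          lam S * dS p S σ)
        ≤ Real.log (1 / p) * (1 - p) / (((K' + 2 : ℕ) : ℝ) - 1 + p) := by
  have hK : 2 ≤ K' + 2 := by omega
  have hKp := Kp_pos (K := K' + 2) hp0 hK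
  have h1p : (0:ℝ) < 1 - p := by linarith
  have hL := log_nonneg' hp0 hp1
  set c := Real.log (1 / p) * (1 - p) / (((K' + 2 : ℕ) : ℝ) - 1 + p) with hc
  set a : Fin (K' + 1) → ℝ := fun i =>
    ∑ S ∈ Finset.univ.filter (fun S : Finset (Fin (K' + 2)) => 2 ≤ S.card),
      lam S * dS p S (Equiv.swap i.castSucc i.succ) with ha
  -- inner bound for each S
  have hinner : ∀ S ∈ Finset.univ.filter (fun S : Finset (Fin (K' + 2)) => 2 ≤ S.card),
      ∑ i : Fin (K' + 1), ((1 + if i = Fin.last K' then p else 0) *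
          dS p S (Equiv.swap i.castSucc i.succ))
        ≤ Real.log (1 / p) * (1 - p) := by
    intro S hSf
    rw [Finset.mem_filter] at hSf
    have hS2 := hSf.2
    have hSne : S.Nonempty := by rw [← Finset.card_pos]; omega
    have hm : (0:ℝ) < 1 - p ^ S.card := by
      have : p ^ S.card < 1 := pow_lt_one₀ hp0.le hp1 (by omega)
      linarith
    have hgeom : ∑ t ∈ Finset.range S.card, p ^ t = (1 - p ^ S.card) / (1 - p) := by
      rw [geom_sum_eq (by linarith : p ≠ 1),
        div_eq_div_iff (by linarith) (by linarith)]
      ring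
    have hrw : ∀ i : Fin (K' + 1), ((1 + if i = Fin.last K' then p else 0) *
          dS p S (Equiv.swap i.castSucc i.succ))
        = Real.log (1 / p) * ((1 - p) / (1 - p ^ S.card))
          * ((1 + if i = Fin.last K' then p else 0) *
              ISum p S (Equiv.swap i.castSucc i.succ)) := by
      intro i
      rw [dS_eq hp0 hp1 hSne]
      ring
    rw [Finset.sum_congr rfl (fun i _ => hrw i), ← Finset.mul_sum]
    have hps := perS hp0 hp1 hS2
    rw [hgeom] at hps
    have hfac : (0:ℝ) ≤ Real.log (1 / p) * ((1 - p) / (1 - p ^ S.card)) := by positivity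
    calc Real.log (1 / p) * ((1 - p) / (1 - p ^ S.card))
          * ∑ i : Fin (K' + 1), ((1 + if i = Fin.last K' then p else 0) *
              ISum p S (Equiv.swap i.castSucc i.succ))
        ≤ Real.log (1 / p) * ((1 - p) / (1 - p ^ S.card))
          * ((1 - p) * ((1 - p ^ S.card) / (1 - p))) := mul_le_mul_of_nonneg_left hps hfac
      _ = Real.log (1 / p) * (1 - p) := by field_simp
  -- combine over S
  have hmain : ∑ i : Fin (K' + 1), ((1 + if i = Fin.last K' then p else 0) * a i)
      ≤ Real.log (1 / p) * (1 - p) := by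
    have hswap : ∑ i : Fin (K' + 1), ((1 + if i = Fin.last K' then p else 0) * a i)
        = ∑ S ∈ Finset.univ.filter (fun S : Finset (Fin (K' + 2)) => 2 ≤ S.card),
            lam S * ∑ i : Fin (K' + 1), ((1 + if i = Fin.last K' then p else 0) *
              dS p S (Equiv.swap i.castSucc i.succ)) := by
      simp only [ha, Finset.mul_sum, Finset.sum_mul]
      rw [Finset.sum_comm]
      apply Finset.sum_congr rfl
      intro S _
      apply Finset.sum_congr rfl
      intro i _
      ring
    rw [hswap]
    calc ∑ S ∈ Finset.univ.filter (fun S : Finset (Fin (K' + 2)) => 2 ≤ S.card),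
          lam S * ∑ i : Fin (K' + 1), ((1 + if i = Fin.last K' then p else 0) *
            dS p S (Equiv.swap i.castSucc i.succ))
        ≤ ∑ S ∈ Finset.univ.filter (fun S : Finset (Fin (K' + 2)) => 2 ≤ S.card),
            lam S * (Real.log (1 / p) * (1 - p)) := by
          apply Finset.sum_le_sum
          intro S hSf
          have hSf' := hSf
          rw [Finset.mem_filter] at hSf'
          exact mul_le_mul_of_nonneg_left (hinner S hSf) (hnn S hSf'.2)
      _ = Real.log (1 / p) * (1 - p) := by
          rw [← Finset.sum_mul, hsum, one_mul]
  -- conclude by contradiction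
  have hex : ∃ i : Fin (K' + 1), a i ≤ c := by
    by_contra hcon
    push_neg at hcon
    have hwsum : ∑ i : Fin (K' + 1), ((1 + if i = Fin.last K' then p else 0) * c)
        = Real.log (1 / p) * (1 - p) := by
      rw [← Finset.sum_mul]
      have : ∑ i : Fin (K' + 1), (1 + if i = Fin.last K' then p else 0)
          = ((K' + 1 : ℕ) : ℝ) + p := by
        rw [Finset.sum_add_distrib, Finset.sum_const, Finset.sum_ite_eq' Finset.univ (Fin.last K')]
        simp
      rw [this, hc]
      have hcast : ((K' + 2 : ℕ) : ℝ) - 1 + p = ((K' + 1 : ℕ) : ℝ) + p := by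
        push_cast; ring
      rw [hcast]
      field_simp
    have hlt : ∑ i : Fin (K' + 1), ((1 + if i = Fin.last K' then p else 0) * c)
        < ∑ i : Fin (K' + 1), ((1 + if i = Fin.last K' then p else 0) * a i) := by
      apply Finset.sum_lt_sum_of_nonempty Finset.univ_nonempty
      intro i _
      have hw : (0:ℝ) < 1 + if i = Fin.last K' then p else 0 := by
        split_ifs <;> linarith
      exact mul_lt_mul_of_pos_left (hcon i) hw
    rw [hwsum] at hlt
    linarith
  obtain ⟨i, hi⟩ := hex
  refine ⟨Equiv.swap i.castSucc i.succ, ?_, hi⟩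
  intro hone
  have := congrArg (fun f : Equiv.Perm (Fin (K' + 2)) => f i.castSucc) hone
  simp only [Equiv.swap_apply_left, Equiv.Perm.one_apply] at this
  have : (i.succ : ℕ) = (i.castSucc : ℕ) := congrArg Fin.val this
  simp at this

end OAProof


/-- Proposition 3 (optimal allocation): the minimum over non-identity
permutations `σ` of `∑_{S ∈ 𝒮} λ*(S)·d_S(σ)` equals
`log(1/p)·(1−p)/(K−1+p)`; in particular the nested allocation `λ*` attains the
supremum in the full-ranking max-min problem over OA alternatives. -/


theorem stmt11 (p : ℝ) (hp0 : 0 < p) (hp1 : p < 1) (K : ℕ) (hK : 2 ≤ K) :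
    IsLeast { w : ℝ | ∃ σ : Equiv.Perm (Fin K), σ ≠ 1 ∧
        w = ∑ S ∈ Finset.univ.filter (fun S : Finset (Fin K) => 2 ≤ S.card),
              lamStar p K S * dS p S σ }
      (Real.log (1 / p) * (1 - p) / ((K : ℝ) - 1 + p))
    ∧ sInf { w : ℝ | ∃ σ : Equiv.Perm (Fin K), σ ≠ 1 ∧
        w = ∑ S ∈ Finset.univ.filter (fun S : Finset (Fin K) => 2 ≤ S.card),
              lamStar p K S * dS p S σ }
      = sSup { v : ℝ | ∃ lam : Finset (Fin K) → ℝ,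
          (∀ S : Finset (Fin K), 2 ≤ S.card → 0 ≤ lam S) ∧
          (∑ S ∈ Finset.univ.filter (fun S : Finset (Fin K) => 2 ≤ S.card), lam S) = 1 ∧
          v = sInf { w : ℝ | ∃ σ : Equiv.Perm (Fin K), σ ≠ 1 ∧
              w = ∑ S ∈ Finset.univ.filter (fun S : Finset (Fin K) => 2 ≤ S.card),
                    lam S * dS p S σ } } := by
  
  have hKp := OAProof.Kp_pos hp0 hK
  have hLeast : IsLeast { w : ℝ | ∃ σ : Equiv.Perm (Fin K), σ ≠ 1 ∧
      w = ∑ S ∈ Finset.univ.filter (fun S : Finset (Fin K) => 2 ≤ S.card),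
            lamStar p K S * dS p S σ }
      (Real.log (1 / p) * (1 - p) / ((K : ℝ) - 1 + p)) := by
    constructor
    · refine ⟨Equiv.swap (⟨K - 2, by omega⟩ : Fin K) ⟨K - 1, by omega⟩, ?_,
        (OAProof.V_swap_eq hp0 hp1 hK).symm⟩
      intro h
      have h2 := congrArg (fun f : Equiv.Perm (Fin K) =>
        f (⟨K - 2, by omega⟩ : Fin K)) h
      simp only [Equiv.swap_apply_left, Equiv.Perm.one_apply] at h2
      have h3 := congrArg Fin.val h2
      simp only at h3
      omega
    · rintro w ⟨σ, hσ, rfl⟩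
      exact OAProof.V_ge hp0 hp1 hK hσ
  refine ⟨hLeast, ?_⟩
  rw [hLeast.csInf_eq]
  refine (IsGreatest.csSup_eq ⟨?_, ?_⟩).symm
  · exact ⟨lamStar p K, fun S _ => OAProof.lamStar_nonneg hp0 hp1 hK S,
      OAProof.lamStar_sum_one hp0 hp1 hK, (hLeast.csInf_eq).symm⟩
  · rintro v ⟨lam, hnn, hsum, rfl⟩
    obtain ⟨K', rfl⟩ : ∃ K', K = K' + 2 := ⟨K - 2, by omega⟩
    obtain ⟨σ, hσ1, hσle⟩ := OAProof.exists_good_swap hp0 hp1 lam hnn hsum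
    have hbdd : BddBelow { w : ℝ | ∃ σ : Equiv.Perm (Fin (K' + 2)), σ ≠ 1 ∧
        w = ∑ S ∈ Finset.univ.filter (fun S : Finset (Fin (K' + 2)) => 2 ≤ S.card),
              lam S * dS p S σ } := by
      refine ⟨0, ?_⟩
      rintro w ⟨τ, hτ, rfl⟩
      apply Finset.sum_nonneg
      intro S hSf
      rw [Finset.mem_filter] at hSf
      refine mul_nonneg (hnn S hSf.2) (OAProof.dS_nonneg hp0 hp1 ?_ τ)
      rw [← Finset.card_pos]
      omega
    exact le_trans (csInf_le hbdd ⟨σ, hσ1, rfl⟩) hσle
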